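/- For each a ∈ {1, 2, 3}, H decomposes as the orthogonal direct sum H = H_a(1) ⊕ H_a(−1), and dim H_a(1) = dim H_a(−1); in particular dim H is even. -/

import Mathlib

open RealInnerProductSpace

/-- An almost contact metric structure `(φ, ξ, η)` together with an almost contact metric
3-structure `(φ_a, ξ_a, η_a)`, `a ∈ {1,2,3}` (indices mod 3), on a real inner product space `V`,
modelling the structures induced on the tangent space of a real hypersurface in the complex
two-plane Grassmannian `G₂(ℂ^{m+2})` by the Kaehler structure `J` and the quaternionic Kaehler
structure `𝔍`.  Here `η(X) = ⟪ξ, X⟫` and `η_a(X) = ⟪ξ_a, X⟫` are written out via the inner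
product. -/
structure ACMS3 (V : Type*) [NormedAddCommGroup V] [InnerProductSpace ℝ V] where
  phi : V →ₗ[ℝ] V
  xi : V
  phiA : Fin 3 → V →ₗ[ℝ] V
  xiA : Fin 3 → V
  xi_unit : ‖xi‖ = 1
  phi_sq : ∀ X : V, phi (phi X) = -X + ⟪xi, X⟫ • xi
  phi_xi : phi xi = 0
  phi_metric : ∀ X Y : V, ⟪phi X, phi Y⟫ = ⟪X, Y⟫ - ⟪xi, X⟫ * ⟪xi, Y⟫
  xiA_unit : ∀ a, ‖xiA a‖ = 1
  phiA_sq : ∀ a (X : V), phiA a (phiA a X) = -X + ⟪xiA a, X⟫ • xiA a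
  phiA_xiA : ∀ a, phiA a (xiA a) = 0
  phiA_metric : ∀ a (X Y : V),
    ⟪phiA a X, phiA a Y⟫ = ⟪X, Y⟫ - ⟪xiA a, X⟫ * ⟪xiA a, Y⟫
  quat1 : ∀ a (X : V), phiA a (phiA (a + 1) X) - ⟪xiA (a + 1), X⟫ • xiA a = phiA (a + 2) X
  quat2 : ∀ a (X : V),
    phiA (a + 2) X = -(phiA (a + 1) (phiA a X)) + ⟪xiA a, X⟫ • xiA (a + 1)
  quat_xi1 : ∀ a, phiA a (xiA (a + 1)) = xiA (a + 2)
  quat_xi2 : ∀ a, xiA (a + 2) = -(phiA (a + 1) (xiA a))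
  rel : ∀ a (X : V), phiA a (phi X) - ⟪xi, X⟫ • xiA a = phi (phiA a X) - ⟪xiA a, X⟫ • xi
  rel_xi : ∀ a, phi (xiA a) = phiA a xi

variable {V : Type*} [NormedAddCommGroup V] [InnerProductSpace ℝ V]

/-- The endomorphism `θ_a X := φ_a φ X − η(X) ξ_a`. -/
noncomputable def ACMS3.theta (S : ACMS3 V) (a : Fin 3) : V →ₗ[ℝ] V where
  toFun X := S.phiA a (S.phi X) - ⟪S.xi, X⟫ • S.xiA a
  map_add' X Y := by
    simp only [map_add, inner_add_right, add_smul]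
    abel
  map_smul' r X := by
    simp only [map_smul, inner_smul_right, RingHom.id_apply, smul_sub, smul_smul]

/-- `H^⊥ = span{ξ, ξ₁, ξ₂, ξ₃, φξ₁, φξ₂, φξ₃}`. -/
noncomputable def ACMS3.Hperp (S : ACMS3 V) : Submodule ℝ V :=
  Submodule.span ℝ {S.xi, S.xiA 0, S.xiA 1, S.xiA 2,
    S.phi (S.xiA 0), S.phi (S.xiA 1), S.phi (S.xiA 2)}

/-- `H` is the orthogonal complement of `H^⊥` in `V`. -/
noncomputable def ACMS3.H (S : ACMS3 V) : Submodule ℝ V := S.Hperpᗮ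

/-- `H_a(ε)`, the eigenspace of `θ_a` restricted to `H` corresponding to the eigenvalue `ε`. -/
noncomputable def ACMS3.eigenH (S : ACMS3 V) (a : Fin 3) (ε : ℝ) : Submodule ℝ V :=
  S.H ⊓ Module.End.eigenspace (S.theta a) ε

/-- The normal Jacobi operator
`R̂_N X = X + 3η(X)ξ + Σ_a (3η_a(X)ξ_a − η(ξ_a)θ_a X + η_a(φX)φξ_a)`. -/
noncomputable def ACMS3.jacobi (S : ACMS3 V) (X : V) : V :=
  X + (3 * ⟪S.xi, X⟫) • S.xi +
    ∑ a : Fin 3, ((3 * ⟪S.xiA a, X⟫) • S.xiA a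
      - ⟪S.xi, S.xiA a⟫ • S.theta a X
      + ⟪S.xiA a, S.phi X⟫ • S.phi (S.xiA a))

namespace ACMS3

lemma fin3_1 : ∀ x : Fin 3, x + 2 + 2 = x + 1 := by decide
lemma fin3_2 : ∀ x : Fin 3, x + 2 + 1 = x := by decide

variable (S : ACMS3 V)

lemma xi_ne_zero : S.xi ≠ 0 := by
  intro h
  have := S.xi_unit
  rw [h, norm_zero] at this
  norm_num at this

lemma xiA_ne_zero (a : Fin 3) : S.xiA a ≠ 0 := by
  intro h
  have := S.xiA_unit a
  rw [h, norm_zero] at this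
  norm_num at this

lemma eta_phi (X : V) : ⟪S.xi, S.phi X⟫ = 0 := by
  have h1 := S.phi_sq (S.phi X)
  have h2 := congrArg S.phi (S.phi_sq X)
  rw [map_add, map_neg, map_smul, S.phi_xi, smul_zero, add_zero] at h2
  rw [h2] at h1
  rcases smul_eq_zero.mp (left_eq_add.mp h1) with h | h
  · exact h
  · exact absurd h S.xi_ne_zero

lemma etaA_phiA (a : Fin 3) (X : V) : ⟪S.xiA a, S.phiA a X⟫ = 0 := by
  have h1 := S.phiA_sq a (S.phiA a X)
  have h2 := congrArg (S.phiA a) (S.phiA_sq a X)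
  rw [map_add, map_neg, map_smul, S.phiA_xiA a, smul_zero, add_zero] at h2
  rw [h2] at h1
  rcases smul_eq_zero.mp (left_eq_add.mp h1) with h | h
  · exact h
  · exact absurd h (S.xiA_ne_zero a)

lemma phi_skew (X Y : V) : ⟪S.phi X, Y⟫ = -⟪X, S.phi Y⟫ := by
  have h := S.phi_metric X (S.phi Y)
  rw [S.phi_sq Y] at h
  simp only [inner_add_right, inner_neg_right, real_inner_smul_right] at h
  have e1 : ⟪S.phi X, S.xi⟫ = 0 := by rw [real_inner_comm]; exact S.eta_phi X
  rw [e1, S.eta_phi Y] at h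
  linarith

lemma phiA_skew (a : Fin 3) (X Y : V) : ⟪S.phiA a X, Y⟫ = -⟪X, S.phiA a Y⟫ := by
  have h := S.phiA_metric a X (S.phiA a Y)
  rw [S.phiA_sq a Y] at h
  simp only [inner_add_right, inner_neg_right, real_inner_smul_right] at h
  have e1 : ⟪S.phiA a X, S.xiA a⟫ = 0 := by rw [real_inner_comm]; exact S.etaA_phiA a X
  rw [e1, S.etaA_phiA a Y] at h
  linarith

lemma phiA_xiA_prev (a : Fin 3) : S.phiA a (S.xiA (a + 2)) = -S.xiA (a + 1) := by
  have h := S.quat_xi2 (a + 2)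
  rw [fin3_1, fin3_2] at h
  rw [h, neg_neg]

lemma xi_mem_Hperp : S.xi ∈ S.Hperp := Submodule.subset_span (by simp)

lemma xiA_mem_Hperp (b : Fin 3) : S.xiA b ∈ S.Hperp := by
  fin_cases b <;> exact Submodule.subset_span (by simp)

lemma phi_xiA_mem_Hperp (b : Fin 3) : S.phi (S.xiA b) ∈ S.Hperp := by
  fin_cases b <;> exact Submodule.subset_span (by simp)

lemma phi_mem_Hperp {X : V} (hX : X ∈ S.Hperp) : S.phi X ∈ S.Hperp := by
  suffices h : S.Hperp ≤ Submodule.comap S.phi S.Hperp from h hX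
  show Submodule.span ℝ _ ≤ _
  rw [Submodule.span_le]
  intro v hv
  simp only [Set.mem_insert_iff, Set.mem_singleton_iff] at hv
  rcases hv with rfl | rfl | rfl | rfl | rfl | rfl | rfl <;>
    simp only [Submodule.mem_comap, SetLike.mem_coe]
  · rw [S.phi_xi]; exact zero_mem _
  · exact S.phi_xiA_mem_Hperp 0
  · exact S.phi_xiA_mem_Hperp 1
  · exact S.phi_xiA_mem_Hperp 2
  · rw [S.phi_sq]
    exact add_mem (neg_mem (S.xiA_mem_Hperp 0)) (Submodule.smul_mem _ _ S.xi_mem_Hperp)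
  · rw [S.phi_sq]
    exact add_mem (neg_mem (S.xiA_mem_Hperp 1)) (Submodule.smul_mem _ _ S.xi_mem_Hperp)
  · rw [S.phi_sq]
    exact add_mem (neg_mem (S.xiA_mem_Hperp 2)) (Submodule.smul_mem _ _ S.xi_mem_Hperp)

lemma phiA_xiA_mem_Hperp (c b : Fin 3) : S.phiA c (S.xiA b) ∈ S.Hperp := by
  obtain ⟨d, rfl⟩ : ∃ d, b = c + d := ⟨b - c, by revert b c; decide⟩
  fin_cases d
  · show S.phiA c (S.xiA (c + 0)) ∈ S.Hperp
    rw [add_zero, S.phiA_xiA]; exact zero_mem _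
  · show S.phiA c (S.xiA (c + 1)) ∈ S.Hperp
    rw [S.quat_xi1]; exact S.xiA_mem_Hperp _
  · show S.phiA c (S.xiA (c + 2)) ∈ S.Hperp
    rw [S.phiA_xiA_prev]; exact neg_mem (S.xiA_mem_Hperp _)

lemma phiA_mem_Hperp (c : Fin 3) {X : V} (hX : X ∈ S.Hperp) : S.phiA c X ∈ S.Hperp := by
  suffices h : S.Hperp ≤ Submodule.comap (S.phiA c) S.Hperp from h hX
  show Submodule.span ℝ _ ≤ _
  rw [Submodule.span_le]
  have key : ∀ b : Fin 3, S.phiA c (S.phi (S.xiA b)) ∈ S.Hperp := by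
    intro b
    have h := S.rel c (S.xiA b)
    have h2 : S.phiA c (S.phi (S.xiA b)) =
        S.phi (S.phiA c (S.xiA b)) - ⟪S.xiA c, S.xiA b⟫ • S.xi + ⟪S.xi, S.xiA b⟫ • S.xiA c := by
      rw [← h]; abel
    rw [h2]
    exact add_mem (sub_mem (S.phi_mem_Hperp (S.phiA_xiA_mem_Hperp c b))
      (Submodule.smul_mem _ _ S.xi_mem_Hperp)) (Submodule.smul_mem _ _ (S.xiA_mem_Hperp c))
  intro v hv
  simp only [Set.mem_insert_iff, Set.mem_singleton_iff] at hv
  rcases hv with rfl | rfl | rfl | rfl | rfl | rfl | rfl <;>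
    simp only [Submodule.mem_comap, SetLike.mem_coe]
  · rw [← S.rel_xi]; exact S.phi_xiA_mem_Hperp c
  · exact S.phiA_xiA_mem_Hperp c 0
  · exact S.phiA_xiA_mem_Hperp c 1
  · exact S.phiA_xiA_mem_Hperp c 2
  · exact key 0
  · exact key 1
  · exact key 2

lemma inner_Hperp_H {u X : V} (hu : u ∈ S.Hperp) (hX : X ∈ S.H) : ⟪u, X⟫ = 0 :=
  (Submodule.mem_orthogonal _ _).mp hX u hu

lemma eta_H {X : V} (hX : X ∈ S.H) : ⟪S.xi, X⟫ = 0 := S.inner_Hperp_H S.xi_mem_Hperp hX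

lemma etaA_H {X : V} (hX : X ∈ S.H) (b : Fin 3) : ⟪S.xiA b, X⟫ = 0 :=
  S.inner_Hperp_H (S.xiA_mem_Hperp b) hX

lemma phi_mem_H {X : V} (hX : X ∈ S.H) : S.phi X ∈ S.H := by
  rw [ACMS3.H, Submodule.mem_orthogonal]
  intro u hu
  have h := S.phi_skew u X
  rw [S.inner_Hperp_H (S.phi_mem_Hperp hu) hX] at h
  linarith [real_inner_comm u (S.phi X)]

lemma phiA_mem_H (c : Fin 3) {X : V} (hX : X ∈ S.H) : S.phiA c X ∈ S.H := by
  rw [ACMS3.H, Submodule.mem_orthogonal]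
  intro u hu
  have h := S.phiA_skew c u X
  rw [S.inner_Hperp_H (S.phiA_mem_Hperp c hu) hX] at h
  linarith [real_inner_comm u (S.phiA c X)]

lemma etaA_phi_H {X : V} (hX : X ∈ S.H) (b : Fin 3) : ⟪S.xiA b, S.phi X⟫ = 0 := by
  have h := S.phi_skew (S.xiA b) X
  rw [S.inner_Hperp_H (S.phi_xiA_mem_Hperp b) hX] at h
  linarith

lemma rel_H (a : Fin 3) {X : V} (h1 : ⟪S.xi, X⟫ = 0) (h2 : ⟪S.xiA a, X⟫ = 0) :
    S.phiA a (S.phi X) = S.phi (S.phiA a X) := by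
  have h := S.rel a X
  rwa [h1, h2, zero_smul, zero_smul, sub_zero, sub_zero] at h

lemma theta_apply (a : Fin 3) (X : V) :
    S.theta a X = S.phiA a (S.phi X) - ⟪S.xi, X⟫ • S.xiA a := rfl

lemma theta_apply_H (a : Fin 3) {X : V} (hX : X ∈ S.H) :
    S.theta a X = S.phiA a (S.phi X) := by
  rw [theta_apply, S.eta_H hX, zero_smul, sub_zero]

lemma theta_mem_H (a : Fin 3) {X : V} (hX : X ∈ S.H) : S.theta a X ∈ S.H := by
  rw [S.theta_apply_H a hX]
  exact S.phiA_mem_H a (S.phi_mem_H hX)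

lemma theta_theta (a : Fin 3) {X : V} (hX : X ∈ S.H) : S.theta a (S.theta a X) = X := by
  have hmem := S.theta_mem_H a hX
  have h2 := S.rel a (S.phi X)
  rw [S.eta_phi X, S.etaA_phi_H hX a, zero_smul, zero_smul, sub_zero, sub_zero, S.phi_sq X,
    S.eta_H hX, zero_smul, add_zero, map_neg] at h2
  rw [S.theta_apply_H a hmem, S.theta_apply_H a hX, ← h2, map_neg, S.phiA_sq, S.etaA_H hX a,
    zero_smul, add_zero, neg_neg]

lemma theta_symm (a : Fin 3) {X Y : V} (hX : X ∈ S.H) (hY : Y ∈ S.H) :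
    ⟪S.theta a X, Y⟫ = ⟪X, S.theta a Y⟫ := by
  rw [S.theta_apply_H a hX, S.theta_apply_H a hY]
  calc ⟪S.phiA a (S.phi X), Y⟫ = -⟪S.phi X, S.phiA a Y⟫ := S.phiA_skew a _ Y
    _ = ⟪X, S.phi (S.phiA a Y)⟫ := by rw [S.phi_skew, neg_neg]
    _ = ⟪X, S.phiA a (S.phi Y)⟫ := by rw [S.rel_H a (S.eta_H hY) (S.etaA_H hY a)]

lemma theta_anticomm (a : Fin 3) {X : V} (hX : X ∈ S.H) :
    S.theta a (S.phiA (a + 1) X) = -(S.phiA (a + 1) (S.theta a X)) := by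
  have hX1 : S.phiA (a + 1) X ∈ S.H := S.phiA_mem_H (a + 1) hX
  rw [S.theta_apply_H a hX1, S.theta_apply_H a hX,
    ← S.rel_H (a + 1) (S.eta_H hX) (S.etaA_H hX (a + 1))]
  have h2 := S.quat1 a (S.phi X)
  rw [S.etaA_phi_H hX (a + 1), zero_smul, sub_zero] at h2
  have h3 := S.quat2 a (S.phi X)
  rw [S.etaA_phi_H hX a, zero_smul, add_zero] at h3
  rw [h2, h3]

lemma phiA_inj_H (c : Fin 3) {X : V} (hX : X ∈ S.H) (h0 : S.phiA c X = 0) : X = 0 := by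
  have h := S.phiA_sq c X
  rw [h0, map_zero, S.etaA_H hX c, zero_smul, add_zero] at h
  have := h.symm
  rwa [neg_eq_zero] at this

lemma mem_eigenH {a : Fin 3} {ε : ℝ} {X : V} :
    X ∈ S.eigenH a ε ↔ X ∈ S.H ∧ S.theta a X = ε • X := by
  rw [ACMS3.eigenH, Submodule.mem_inf, Module.End.mem_eigenspace_iff]

lemma phiA_maps_eigen (a : Fin 3) (ε : ℝ) {X : V} (hX : X ∈ S.eigenH a ε) :
    S.phiA (a + 1) X ∈ S.eigenH a (-ε) := by
  obtain ⟨hH, he⟩ := S.mem_eigenH.mp hX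
  refine S.mem_eigenH.mpr ⟨S.phiA_mem_H (a + 1) hH, ?_⟩
  rw [S.theta_anticomm a hH, he, map_smul, neg_smul]

end ACMS3

/-- For each `a ∈ {1,2,3}`, `H` decomposes as the orthogonal direct sum
`H = H_a(1) ⊕ H_a(−1)`, and `dim H_a(1) = dim H_a(−1)`; in particular `dim H` is even. -/
theorem eigenH_orthogonal_decomposition [FiniteDimensional ℝ V] (S : ACMS3 V) (a : Fin 3) :
    S.eigenH a 1 ⊔ S.eigenH a (-1) = S.H ∧
    (∀ x ∈ S.eigenH a 1, ∀ y ∈ S.eigenH a (-1), ⟪x, y⟫ = 0) ∧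
    Module.finrank ℝ (S.eigenH a 1) = Module.finrank ℝ (S.eigenH a (-1)) ∧
    Even (Module.finrank ℝ S.H) := by
  have hsup : S.eigenH a 1 ⊔ S.eigenH a (-1) = S.H := by
    apply le_antisymm (sup_le inf_le_left inf_le_left)
    intro X hX
    have hTX := S.theta_mem_H a hX
    refine Submodule.mem_sup.mpr
      ⟨(1/2 : ℝ) • (X + S.theta a X), ?_, (1/2 : ℝ) • (X - S.theta a X), ?_, by module⟩
    · refine Submodule.smul_mem _ _ (S.mem_eigenH.mpr ⟨add_mem hX hTX, ?_⟩)
      rw [map_add, S.theta_theta a hX, one_smul]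
      abel
    · refine Submodule.smul_mem _ _ (S.mem_eigenH.mpr ⟨sub_mem hX hTX, ?_⟩)
      rw [map_sub, S.theta_theta a hX]
      module
  have horth : ∀ x ∈ S.eigenH a 1, ∀ y ∈ S.eigenH a (-1), ⟪x, y⟫ = 0 := by
    intro x hx y hy
    obtain ⟨hxH, hxe⟩ := S.mem_eigenH.mp hx
    obtain ⟨hyH, hye⟩ := S.mem_eigenH.mp hy
    have h := S.theta_symm a hxH hyH
    rw [hxe, hye, one_smul, inner_smul_right] at h
    linarith
  have hmap1 : ∀ x ∈ S.eigenH a 1, S.phiA (a + 1) x ∈ S.eigenH a (-1) := fun x hx =>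
    S.phiA_maps_eigen a 1 hx
  have hmap2 : ∀ x ∈ S.eigenH a (-1), S.phiA (a + 1) x ∈ S.eigenH a 1 := fun x hx => by
    have h := S.phiA_maps_eigen a (-1) hx
    rwa [neg_neg] at h
  set f : S.eigenH a 1 →ₗ[ℝ] S.eigenH a (-1) := (S.phiA (a + 1)).restrict hmap1 with hf
  set g : S.eigenH a (-1) →ₗ[ℝ] S.eigenH a 1 := (S.phiA (a + 1)).restrict hmap2 with hg
  have hfinj : Function.Injective f := by
    rw [injective_iff_map_eq_zero]
    intro x hx0
    have h1 : S.phiA (a + 1) (x : V) = 0 := by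
      have h2 := congrArg Subtype.val hx0
      simpa [hf, LinearMap.restrict_apply] using h2
    exact Subtype.ext (S.phiA_inj_H (a + 1) (S.mem_eigenH.mp x.2).1 h1)
  have hginj : Function.Injective g := by
    rw [injective_iff_map_eq_zero]
    intro x hx0
    have h1 : S.phiA (a + 1) (x : V) = 0 := by
      have h2 := congrArg Subtype.val hx0
      simpa [hg, LinearMap.restrict_apply] using h2
    exact Subtype.ext (S.phiA_inj_H (a + 1) (S.mem_eigenH.mp x.2).1 h1)
  have hrank : Module.finrank ℝ (S.eigenH a 1) = Module.finrank ℝ (S.eigenH a (-1)) :=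
    le_antisymm (LinearMap.finrank_le_finrank_of_injective hfinj)
      (LinearMap.finrank_le_finrank_of_injective hginj)
  have hdisj : S.eigenH a 1 ⊓ S.eigenH a (-1) = ⊥ := by
    rw [eq_bot_iff]
    intro x hx
    rw [Submodule.mem_inf] at hx
    obtain ⟨hx1, hx2⟩ := hx
    obtain ⟨_, he1⟩ := S.mem_eigenH.mp hx1
    obtain ⟨_, he2⟩ := S.mem_eigenH.mp hx2
    rw [he1, one_smul, neg_smul, one_smul] at he2
    have h2 : x + x = 0 := eq_neg_iff_add_eq_zero.mp he2
    rw [← two_smul ℝ x] at h2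
    rw [Submodule.mem_bot]
    rcases smul_eq_zero.mp h2 with h | h
    · norm_num at h
    · exact h
  have heq := Submodule.finrank_sup_add_finrank_inf_eq (S.eigenH a 1) (S.eigenH a (-1))
  rw [hdisj, hsup, finrank_bot, add_zero] at heq
  exact ⟨hsup, horth, hrank, ⟨Module.finrank ℝ (S.eigenH a (-1)), by omega⟩⟩
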